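/- Let n ≥ 1, γ > 0, and let P, P', Q, Q', R, R' be real n × n matrices and S, S' real symmetric positive semidefinite n × n matrices. Define T = (1/n)Tr(P − Q(S + γI)⁻¹R) and T' = (1/n)Tr(P' − Q'(S' + γI)⁻¹R'). Then |T − T'| ≤ ‖P − P'‖ + γ⁻¹‖Q − Q'‖·‖R‖ + γ⁻¹‖Q'‖·‖R − R'‖ + γ⁻²‖Q'‖·‖R'‖·‖S − S'‖, where ‖·‖ is the ℓ²→ℓ² operator norm. -/

import Mathlib

open Matrix
open scoped Matrix.Norms.L2Operator InnerProductSpace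

/-- The `ℓ²→ℓ²` operator norm of a real `n × n` matrix. -/
noncomputable def opNorm {n : ℕ} (M : Matrix (Fin n) (Fin n) ℝ) : ℝ :=
  ‖LinearMap.toContinuousLinearMap (Matrix.toEuclideanLin M)‖

/-- The KCIT-type statistic `(1/n)Tr(P − Q(S + γI)⁻¹R)`. -/
noncomputable def kcitStat {n : ℕ} (γ : ℝ) (P Q S R : Matrix (Fin n) (Fin n) ℝ) : ℝ :=
  (1 / (n : ℝ)) * (P - Q * (S + γ • (1 : Matrix (Fin n) (Fin n) ℝ))⁻¹ * R).trace

lemma opNorm_eq_l2 {n : ℕ} (M : Matrix (Fin n) (Fin n) ℝ) : opNorm M = ‖M‖ := rfl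

lemma kcit_abs_entry_le {n : ℕ} (M : Matrix (Fin n) (Fin n) ℝ) (i j : Fin n) :
    |M i j| ≤ ‖M‖ := by
  set v := Matrix.toEuclideanLin M (EuclideanSpace.single j (1:ℝ)) with hv
  have h1 : v i = M i j := by
    rw [hv, Matrix.toEuclideanLin_apply]
    show (M *ᵥ (WithLp.equiv 2 _) (EuclideanSpace.single j (1:ℝ))) i = M i j
    simp [Matrix.mulVec, dotProduct, Pi.single_apply]
  have h2 : ‖v‖ ≤ ‖M‖ * ‖EuclideanSpace.single j (1:ℝ)‖ :=
    (LinearMap.toContinuousLinearMap (Matrix.toEuclideanLin M)).le_opNorm _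
  rw [EuclideanSpace.norm_single, norm_one, mul_one] at h2
  refine le_trans ?_ h2
  rw [← h1]
  rw [EuclideanSpace.norm_eq v, show |v i| = Real.sqrt (‖v i‖^2) by
    rw [Real.sqrt_sq_eq_abs]; simp]
  exact Real.sqrt_le_sqrt (Finset.single_le_sum (f := fun k => ‖v k‖^2)
    (fun k _ => by positivity) (Finset.mem_univ i))

lemma kcit_abs_trace_le {n : ℕ} (M : Matrix (Fin n) (Fin n) ℝ) :
    |M.trace| ≤ (n : ℝ) * ‖M‖ := by
  rw [Matrix.trace]
  calc |∑ i, M.diag i| ≤ ∑ i, |M.diag i| := Finset.abs_sum_le_sum_abs _ _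
    _ ≤ ∑ _i : Fin n, ‖M‖ := Finset.sum_le_sum (fun i _ => kcit_abs_entry_le M i i)
    _ = (n : ℝ) * ‖M‖ := by simp [Finset.sum_const, nsmul_eq_mul]

lemma kcit_posDef_shift {n : ℕ} (γ : ℝ) (hγ : 0 < γ) (S : Matrix (Fin n) (Fin n) ℝ)
    (hS : S.PosSemidef) : (S + γ • (1 : Matrix (Fin n) (Fin n) ℝ)).PosDef := by
  have hγ1 : (γ • (1 : Matrix (Fin n) (Fin n) ℝ)).PosDef := by
    rw [smul_one_eq_diagonal]
    exact Matrix.PosDef.diagonal (fun _ => hγ)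
  exact Matrix.PosDef.posSemidef_add hS hγ1

lemma kcit_invBound {n : ℕ} (γ : ℝ) (hγ : 0 < γ) (S : Matrix (Fin n) (Fin n) ℝ)
    (hS : S.PosSemidef) : ‖(S + γ • (1 : Matrix (Fin n) (Fin n) ℝ))⁻¹‖ ≤ γ⁻¹ := by
  set A := S + γ • (1 : Matrix (Fin n) (Fin n) ℝ) with hAdef
  have hA : A.PosDef := kcit_posDef_shift γ hγ S hS
  have hdet : IsUnit A.det := (Matrix.isUnit_iff_isUnit_det A).1 hA.isUnit
  have inner_dp : ∀ x y : EuclideanSpace ℝ (Fin n),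
      ⟪x, y⟫_ℝ = (WithLp.equiv 2 _ x) ⬝ᵥ (WithLp.equiv 2 _ y) := by
    intro x y
    simp [PiLp.inner_apply, dotProduct, RCLike.inner_apply, mul_comm]
  have key : ∀ x : EuclideanSpace ℝ (Fin n), γ * ‖x‖ ≤ ‖Matrix.toEuclideanLin A x‖ := by
    intro x
    rcases eq_or_ne x 0 with rfl | hx
    · simp
    have hxn : 0 < ‖x‖ := norm_pos_iff.2 hx
    have h1 : γ * ‖x‖ ^ 2 ≤ ⟪x, Matrix.toEuclideanLin A x⟫_ℝ := by
      rw [inner_dp, Matrix.toEuclideanLin_apply]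
      set x' := WithLp.equiv 2 (Fin n → ℝ) x with hx'
      have hWe : (WithLp.equiv 2 (Fin n → ℝ)) (WithLp.toLp 2 (A *ᵥ x.ofLp))
          = A *ᵥ x' := rfl
      rw [hWe, hAdef, Matrix.add_mulVec, dotProduct_add, Matrix.smul_mulVec,
        Matrix.one_mulVec]
      have hSx : 0 ≤ x' ⬝ᵥ (S *ᵥ x') := by simpa using hS.dotProduct_mulVec_nonneg x'
      have hxx : x' ⬝ᵥ (γ • x') = γ * (x' ⬝ᵥ x') := by simp [dotProduct_smul]
      have hns : x' ⬝ᵥ x' = ‖x‖ ^ 2 := by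
        have := inner_dp x x
        rw [real_inner_self_eq_norm_sq] at this
        exact this.symm
      rw [hxx, hns]
      linarith
    have h2 : ⟪x, Matrix.toEuclideanLin A x⟫_ℝ ≤ ‖x‖ * ‖Matrix.toEuclideanLin A x‖ :=
      real_inner_le_norm _ _
    have := le_trans h1 h2
    rw [sq] at this
    nlinarith
  have : ‖LinearMap.toContinuousLinearMap (Matrix.toEuclideanLin A⁻¹)‖ ≤ γ⁻¹ := by
    apply ContinuousLinearMap.opNorm_le_bound _ (by positivity)
    intro y
    set x := Matrix.toEuclideanLin A⁻¹ y with hxdef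
    have hAx : Matrix.toEuclideanLin A x = y := by
      rw [hxdef, Matrix.toEuclideanLin_apply, Matrix.toEuclideanLin_apply]
      rw [WithLp.ofLp_toLp, Matrix.mulVec_mulVec, Matrix.mul_nonsing_inv A hdet,
        Matrix.one_mulVec]
    have := key x
    rw [hAx] at this
    show ‖x‖ ≤ γ⁻¹ * ‖y‖
    calc ‖x‖ = γ⁻¹ * (γ * ‖x‖) := by field_simp
      _ ≤ γ⁻¹ * ‖y‖ := by gcongr
  exact this

set_option maxHeartbeats 1000000 in
/-- Deterministic perturbation inequality for the KCIT statistic: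
`|T − T'| ≤ ‖P − P'‖ + γ⁻¹‖Q − Q'‖‖R‖ + γ⁻¹‖Q'‖‖R − R'‖ + γ⁻²‖Q'‖‖R'‖‖S − S'‖`. -/
theorem kcit_perturbation {n : ℕ} (hn : 1 ≤ n) (γ : ℝ) (hγ : 0 < γ)
    (P P' Q Q' R R' S S' : Matrix (Fin n) (Fin n) ℝ)
    (hS : S.PosSemidef) (hS' : S'.PosSemidef) :
    |kcitStat γ P Q S R - kcitStat γ P' Q' S' R'| ≤
      opNorm (P - P') + γ⁻¹ * opNorm (Q - Q') * opNorm R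
        + γ⁻¹ * opNorm Q' * opNorm (R - R')
        + γ⁻¹ ^ 2 * opNorm Q' * opNorm R' * opNorm (S - S') := by
  set A := (S + γ • (1 : Matrix (Fin n) (Fin n) ℝ))⁻¹ with hAdef
  set A' := (S' + γ • (1 : Matrix (Fin n) (Fin n) ℝ))⁻¹ with hA'def
  have hAn : ‖A‖ ≤ γ⁻¹ := kcit_invBound γ hγ S hS
  have hA'n : ‖A'‖ ≤ γ⁻¹ := kcit_invBound γ hγ S' hS'
  have hdet : IsUnit (S + γ • (1 : Matrix (Fin n) (Fin n) ℝ)).det :=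
    (Matrix.isUnit_iff_isUnit_det _).1 (kcit_posDef_shift γ hγ S hS).isUnit
  have hdet' : IsUnit (S' + γ • (1 : Matrix (Fin n) (Fin n) ℝ)).det :=
    (Matrix.isUnit_iff_isUnit_det _).1 (kcit_posDef_shift γ hγ S' hS').isUnit
  -- resolvent identity
  have hres : A - A' = A * (S' - S) * A' := by
    have h1 : A * ((S' + γ • (1 : Matrix (Fin n) (Fin n) ℝ)) * A') = A := by
      rw [hA'def, Matrix.mul_nonsing_inv _ hdet', mul_one]
    have h2 : (A * (S + γ • (1 : Matrix (Fin n) (Fin n) ℝ))) * A' = A' := by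
      rw [hAdef, Matrix.nonsing_inv_mul _ hdet, one_mul]
    have : S' - S = (S' + γ • (1 : Matrix (Fin n) (Fin n) ℝ))
        - (S + γ • (1 : Matrix (Fin n) (Fin n) ℝ)) := by abel
    rw [this, Matrix.mul_sub, Matrix.sub_mul, mul_assoc A (S' + γ • (1 : Matrix (Fin n) (Fin n) ℝ)) A', h1, h2]
  -- decomposition
  set X₁ := (Q - Q') * A * R with hX₁
  set X₂ := Q' * A * (R - R') with hX₂
  set X₃ := Q' * (A - A') * R' with hX₃
  have hdecomp : (P - Q * A * R) - (P' - Q' * A' * R') = (P - P') - X₁ - X₂ - X₃ := by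
    rw [hX₁, hX₂, hX₃]; noncomm_ring
  have hnpos : (0 : ℝ) < (n : ℝ) := by exact_mod_cast hn
  have habs : |kcitStat γ P Q S R - kcitStat γ P' Q' S' R'|
      ≤ ‖P - P'‖ + ‖X₁‖ + ‖X₂‖ + ‖X₃‖ := by
    rw [kcitStat, kcitStat, ← mul_sub, ← hAdef, ← hA'def, ← Matrix.trace_sub, hdecomp]
    rw [Matrix.trace_sub, Matrix.trace_sub, Matrix.trace_sub]
    rw [abs_mul]
    have hb : |(P - P').trace - X₁.trace - X₂.trace - X₃.trace|
        ≤ (n:ℝ) * (‖P - P'‖ + ‖X₁‖ + ‖X₂‖ + ‖X₃‖) := by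
      have b1 := kcit_abs_trace_le (P - P')
      have b2 := kcit_abs_trace_le X₁
      have b3 := kcit_abs_trace_le X₂
      have b4 := kcit_abs_trace_le X₃
      calc |(P - P').trace - X₁.trace - X₂.trace - X₃.trace|
          ≤ |(P - P').trace| + |X₁.trace| + |X₂.trace| + |X₃.trace| := by
            have := abs_sub (a := (P - P').trace - X₁.trace - X₂.trace) (b := X₃.trace)
            calc |(P - P').trace - X₁.trace - X₂.trace - X₃.trace|
                ≤ |(P - P').trace - X₁.trace - X₂.trace| + |X₃.trace| := abs_sub _ _
              _ ≤ |(P - P').trace - X₁.trace| + |X₂.trace| + |X₃.trace| := by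
                  have := abs_sub ((P - P').trace - X₁.trace) X₂.trace; linarith
              _ ≤ |(P - P').trace| + |X₁.trace| + |X₂.trace| + |X₃.trace| := by
                  have := abs_sub (P - P').trace X₁.trace; linarith
        _ ≤ (n:ℝ) * (‖P - P'‖ + ‖X₁‖ + ‖X₂‖ + ‖X₃‖) := by ring_nf; ring_nf at b1 b2 b3 b4; linarith
    calc |1 / (n:ℝ)| * |(P - P').trace - X₁.trace - X₂.trace - X₃.trace|
        ≤ |1 / (n:ℝ)| * ((n:ℝ) * (‖P - P'‖ + ‖X₁‖ + ‖X₂‖ + ‖X₃‖)) := by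
          apply mul_le_mul_of_nonneg_left hb (abs_nonneg _)
      _ = ‖P - P'‖ + ‖X₁‖ + ‖X₂‖ + ‖X₃‖ := by
          rw [abs_of_pos (by positivity)]
          field_simp
  -- bound each term
  have hRnn : (0:ℝ) ≤ ‖R‖ := norm_nonneg _
  have hQ'nn : (0:ℝ) ≤ ‖Q'‖ := norm_nonneg _
  have hγi : (0:ℝ) ≤ γ⁻¹ := by positivity
  have hb1 : ‖X₁‖ ≤ γ⁻¹ * ‖Q - Q'‖ * ‖R‖ := by
    calc ‖X₁‖ ≤ ‖(Q - Q') * A‖ * ‖R‖ := norm_mul_le _ _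
      _ ≤ (‖Q - Q'‖ * ‖A‖) * ‖R‖ := by gcongr; exact norm_mul_le _ _
      _ ≤ (‖Q - Q'‖ * γ⁻¹) * ‖R‖ := by gcongr
      _ = γ⁻¹ * ‖Q - Q'‖ * ‖R‖ := by ring
  have hb2 : ‖X₂‖ ≤ γ⁻¹ * ‖Q'‖ * ‖R - R'‖ := by
    calc ‖X₂‖ ≤ ‖Q' * A‖ * ‖R - R'‖ := norm_mul_le _ _
      _ ≤ (‖Q'‖ * ‖A‖) * ‖R - R'‖ := by gcongr; exact norm_mul_le _ _
      _ ≤ (‖Q'‖ * γ⁻¹) * ‖R - R'‖ := by gcongr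
      _ = γ⁻¹ * ‖Q'‖ * ‖R - R'‖ := by ring
  have hb3 : ‖X₃‖ ≤ γ⁻¹ ^ 2 * ‖Q'‖ * ‖R'‖ * ‖S - S'‖ := by
    have hAA' : ‖A - A'‖ ≤ γ⁻¹ * ‖S - S'‖ * γ⁻¹ := by
      rw [hres]
      calc ‖A * (S' - S) * A'‖ ≤ ‖A * (S' - S)‖ * ‖A'‖ := norm_mul_le _ _
        _ ≤ (‖A‖ * ‖S' - S‖) * ‖A'‖ := by gcongr; exact norm_mul_le _ _
        _ ≤ (γ⁻¹ * ‖S' - S‖) * γ⁻¹ := by gcongr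
        _ = γ⁻¹ * ‖S - S'‖ * γ⁻¹ := by rw [norm_sub_rev]
    calc ‖X₃‖ ≤ ‖Q' * (A - A')‖ * ‖R'‖ := norm_mul_le _ _
      _ ≤ (‖Q'‖ * ‖A - A'‖) * ‖R'‖ := by gcongr; exact norm_mul_le _ _
      _ ≤ (‖Q'‖ * (γ⁻¹ * ‖S - S'‖ * γ⁻¹)) * ‖R'‖ := by gcongr
      _ = γ⁻¹ ^ 2 * ‖Q'‖ * ‖R'‖ * ‖S - S'‖ := by ring
  simp only [opNorm_eq_l2]
  linarith
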